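/- Consider the idealized process with n bins and m ≥ 6n balls, started at round t_0 from an arbitrary load vector y^{t_0} with Σ_i y_i^{t_0} = m. There exists n_0 such that for all n ≥ n_0 and any bin i ∈ [n] with y_i^{t_0} ≤ 2·m/n, the probability that there exists a round t_1 ∈ [t_0, t_0 + ⌈720 · m²/n²⌉] with y_i^{t_1} = 0 is at least 1/4. -/

import Mathlib

open MeasureTheory ProbabilityTheory Finset
open scoped ENNReal

/-- One round of the idealized process: one ball is removed from each non-empty bin and
exactly `n` balls are allocated, one according to each of the `n` bin choices. -/
def idealStep {n : ℕ} (y : Fin n → ℕ) (z : Fin n → Fin n) (i : Fin n) : ℕ :=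
  y i - (if 0 < y i then 1 else 0) + (Finset.univ.filter fun j : Fin n => z j = i).card

/-- The idealized process trajectory started from the load vector `y0`. -/
def ideal {n : ℕ} (y0 : Fin n → ℕ) (Z : ℕ → Fin n → Fin n) : ℕ → Fin n → ℕ
  | 0 => y0
  | t + 1 => idealStep (ideal y0 Z t) (Z t)

lemma walk_eq {n : ℕ} (y0 : Fin n → ℕ) (z : ℕ → Fin n → Fin n) (i : Fin n) :
    ∀ t : ℕ, (∀ s, s < t → ideal y0 z s i ≠ 0) →
      ideal y0 z t i + t = y0 i + ∑ s ∈ Finset.range t,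
        (Finset.univ.filter fun j : Fin n => z s j = i).card := by
  intro t
  induction t with
  | zero => simp [ideal]
  | succ t ih =>
    intro h
    have ht : ideal y0 z t i ≠ 0 := h t (Nat.lt_succ_self t)
    have ih' := ih (fun s hs => h s (hs.trans (Nat.lt_succ_self t)))
    have : ideal y0 z (t+1) i
        = ideal y0 z t i - 1 + (Finset.univ.filter fun j : Fin n => z t j = i).card := by
      simp [ideal, idealStep, Nat.pos_of_ne_zero ht]
    rw [this, Finset.sum_range_succ]
    omega

lemma hit_zero {n : ℕ} (y0 : Fin n → ℕ) (z : ℕ → Fin n → Fin n) (i : Fin n) (T : ℕ)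
    (h : y0 i + ∑ s ∈ Finset.range T,
        (Finset.univ.filter fun j : Fin n => z s j = i).card ≤ T) :
    ∃ t ≤ T, ideal y0 z t i = 0 := by
  by_contra hc
  push_neg at hc
  have := walk_eq y0 z i T (fun s hs => hc s hs.le)
  exact hc T le_rfl (by omega)



/-- Key algebraic inequality: (1 - mt)(1+t)^m ≤ (1 + mt)(1-t)^m for 0 ≤ t, mt ≤ 1. -/
lemma Qlem : ∀ (m : ℕ) (t : ℝ), 0 ≤ t → (m : ℝ) * t ≤ 1 →
    (1 - (m : ℝ) * t) * (1 + t) ^ m ≤ (1 + (m : ℝ) * t) * (1 - t) ^ m := by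
  intro m
  induction m with
  | zero => intro t _ _; simp
  | succ m ih =>
    intro t ht hmt
    have hm1 : ((m : ℝ) + 1) * t ≤ 1 := by push_cast at hmt ⊢; linarith
    have hmt' : (m : ℝ) * t ≤ 1 := by
      nlinarith [Nat.cast_nonneg (α := ℝ) m]
    have ht1 : t ≤ 1 := by
      nlinarith [Nat.cast_nonneg (α := ℝ) m]
    have h1t : (0:ℝ) ≤ 1 - t := by linarith
    have hQ := ih t ht hmt'
    have hpow : (0:ℝ) ≤ (1 + t) ^ m := by positivity
    have hpos : (0:ℝ) < 1 + (m:ℝ) * t := by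
      nlinarith [Nat.cast_nonneg (α := ℝ) m]
    -- core algebra: (1+(m+1)t)(1-t)(1-mt) ≥ (1-(m+1)t)(1+t)(1+mt)
    have key : (1 - ((m:ℝ)+1) * t) * (1 + t) * (1 + (m:ℝ)*t)
        ≤ (1 + ((m:ℝ)+1) * t) * (1 - t) * (1 - (m:ℝ)*t) := by
      have hmt0 : 0 ≤ (m:ℝ) * t := by positivity
      nlinarith [mul_nonneg (mul_nonneg hmt0 ht) (add_nonneg hmt0 ht)]
    -- multiply hQ by (1+(m+1)t)(1-t) ≥ 0
    have step1 : (1 + ((m:ℝ)+1) * t) * (1 - t) * ((1 - (m:ℝ) * t) * (1 + t) ^ m)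
        ≤ (1 + ((m:ℝ)+1) * t) * (1 - t) * ((1 + (m:ℝ) * t) * (1 - t) ^ m) := by
      apply mul_le_mul_of_nonneg_left hQ
      have : (0:ℝ) ≤ 1 + ((m:ℝ)+1) * t := by positivity
      exact mul_nonneg this h1t
    -- multiply key by (1+t)^m ≥ 0
    have step2 : (1 - ((m:ℝ)+1) * t) * (1 + t) * (1 + (m:ℝ)*t) * (1 + t) ^ m
        ≤ (1 + ((m:ℝ)+1) * t) * (1 - t) * (1 - (m:ℝ)*t) * (1 + t) ^ m :=
      mul_le_mul_of_nonneg_right key hpow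
    -- combine and divide by (1 + mt) > 0
    have final : (1 - ((m:ℝ)+1) * t) * (1 + t) ^ (m+1) * (1 + (m:ℝ)*t)
        ≤ (1 + ((m:ℝ)+1) * t) * (1 - t) ^ (m+1) * (1 + (m:ℝ)*t) := by
      have e1 : (1 - ((m:ℝ)+1) * t) * (1 + t) ^ (m+1) * (1 + (m:ℝ)*t)
          = (1 - ((m:ℝ)+1) * t) * (1 + t) * (1 + (m:ℝ)*t) * (1 + t) ^ m := by ring
      have e2 : (1 + ((m:ℝ)+1) * t) * (1 - t) ^ (m+1) * (1 + (m:ℝ)*t)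
          = (1 + ((m:ℝ)+1) * t) * (1 - t) * ((1 + (m:ℝ) * t) * (1 - t) ^ m) := by ring
      have e3 : (1 + ((m:ℝ)+1) * t) * (1 - t) * (1 - (m:ℝ)*t) * (1 + t) ^ m
          = (1 + ((m:ℝ)+1) * t) * (1 - t) * ((1 - (m:ℝ) * t) * (1 + t) ^ m) := by ring
      rw [e1, e2]
      calc (1 - ((m:ℝ)+1) * t) * (1 + t) * (1 + (m:ℝ)*t) * (1 + t) ^ m
          ≤ (1 + ((m:ℝ)+1) * t) * (1 - t) * (1 - (m:ℝ)*t) * (1 + t) ^ m := step2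
        _ = (1 + ((m:ℝ)+1) * t) * (1 - t) * ((1 - (m:ℝ) * t) * (1 + t) ^ m) := e3
        _ ≤ (1 + ((m:ℝ)+1) * t) * (1 - t) * ((1 + (m:ℝ) * t) * (1 - t) ^ m) := step1
    have := le_of_mul_le_mul_right (by
      have e : ∀ A B : ℝ, A * (1 + (m:ℝ)*t) = A * (1 + (m:ℝ)*t) := fun _ _ => rfl
      exact final) hpos
    push_cast
    convert this using 2 <;> push_cast <;> ring

lemma reflect_ineq (n T : ℕ) (hn : 2 ≤ n) (hT : 1 ≤ T) (u : ℝ)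
    (hu0 : 0 ≤ u) (hup : u ≤ 1 / n) :
    (1/(n:ℝ) - u) ^ T * (1 - 1/(n:ℝ) + u) ^ ((n-1)*T - 1)
      ≤ (1/(n:ℝ) + u) ^ T * (1 - 1/(n:ℝ) - u) ^ ((n-1)*T - 1) := by
  have hn0 : (0:ℝ) < n := by
    have : 0 < n := by omega
    exact_mod_cast this
  set p : ℝ := 1 / n with hp
  set q : ℝ := 1 - 1/(n:ℝ) with hq
  set m : ℕ := n - 1 with hm
  have hmR : (m:ℝ) = (n:ℝ) - 1 := by
    have h1 : 1 ≤ n := by omega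
    rw [hm]; push_cast [h1]; ring
  have hm1 : (1:ℝ) ≤ (m:ℝ) := by
    rw [hmR]
    have : (2:ℝ) ≤ n := by exact_mod_cast hn
    linarith
  have hppos : 0 < p := by positivity
  have hqm : q = (m:ℝ) * p := by
    rw [hq, hp, hmR]; field_simp
  have hqpos : 0 < q := by rw [hqm]; positivity
  have hpq : p ≤ q := by
    rw [hqm]
    nlinarith
  set t : ℝ := u / q with htd
  have ht0 : 0 ≤ t := by positivity
  have hmt : (m:ℝ) * t = u / p := by
    rw [htd, hqm]; field_simp
  have hup' : u ≤ p := hup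
  have hmt1 : (m:ℝ) * t ≤ 1 := by
    rw [hmt, div_le_one hppos]; exact hup'
  have hQ := Qlem m t ht0 hmt1
  -- clear denominators: multiply by p * q^m
  have hB : (p - u) * (q + u) ^ m ≤ (p + u) * (q - u) ^ m := by
    have e1 : (p - u) = p * (1 - (m:ℝ) * t) := by
      rw [hmt]; field_simp
    have e2 : (p + u) = p * (1 + (m:ℝ) * t) := by
      rw [hmt]; field_simp
    have e3 : (q + u) = q * (1 + t) := by
      rw [htd]; field_simp
    have e4 : (q - u) = q * (1 - t) := by
      rw [htd]; field_simp
    rw [e1, e2, e3, e4, mul_pow, mul_pow]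
    calc p * (1 - (m:ℝ)*t) * (q^m * (1+t)^m)
        = (p * q^m) * ((1 - (m:ℝ)*t) * (1+t)^m) := by ring
      _ ≤ (p * q^m) * ((1 + (m:ℝ)*t) * (1-t)^m) := by
          apply mul_le_mul_of_nonneg_left hQ; positivity
      _ = p * (1 + (m:ℝ)*t) * (q^m * (1-t)^m) := by ring
  have hB0 : 0 ≤ (p - u) * (q + u) ^ m := by
    apply mul_nonneg (by linarith)
    positivity
  have hpowT := pow_le_pow_left₀ hB0 hB T
  have hmT1 : 1 ≤ m * T := by
    have hm0 : 1 ≤ m := by omega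
    exact Nat.one_le_iff_ne_zero.mpr (Nat.mul_ne_zero (by omega) (by omega))
  set K : ℕ := m*T - 1 with hKd
  have hK1 : m * T = K + 1 := by omega
  have hqu0 : 0 < q + u := by linarith
  have hqmu0 : 0 ≤ q - u := by linarith
  have eL : ((p - u) * (q + u) ^ m) ^ T = (p-u)^T * (q+u)^K * (q+u) := by
    rw [mul_pow, ← pow_mul, hK1, pow_succ]; ring
  have eR : ((p + u) * (q - u) ^ m) ^ T = (p+u)^T * (q-u)^K * (q-u) := by
    rw [mul_pow, ← pow_mul, hK1, pow_succ]; ring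
  rw [eL, eR] at hpowT
  have hRG0 : 0 ≤ (p+u)^T * (q-u)^K := by positivity
  have chain : (p-u)^T * (q+u)^K * (q+u) ≤ (p+u)^T * (q-u)^K * (q+u) := by
    calc (p-u)^T * (q+u)^K * (q+u) ≤ (p+u)^T * (q-u)^K * (q-u) := hpowT
      _ ≤ (p+u)^T * (q-u)^K * (q+u) := by
          apply mul_le_mul_of_nonneg_left (by linarith) hRG0
  exact le_of_mul_le_mul_right chain hqu0

section Median

variable (M : ℕ)

/-- the upper tail CDF-type polynomial -/
noncomputable def Fup (T : ℕ) (x : ℝ) : ℝ :=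
  ∑ k ∈ Finset.Ioc T M, (M.choose k : ℝ) * x^k * (1-x)^(M-k)

noncomputable def gker (T : ℕ) (x : ℝ) : ℝ :=
  ((T+1) * M.choose (T+1) : ℕ) * (x^T * (1-x)^(M-T-1))

lemma hasDerivAt_term (k : ℕ) (hk : 1 ≤ k) (hkM : k ≤ M) (x : ℝ) :
    HasDerivAt (fun y : ℝ => (M.choose k : ℝ) * y^k * (1-y)^(M-k))
      ((k * M.choose k : ℕ) * (x^(k-1) * (1-x)^(M-k))
        - (((k+1) * M.choose (k+1) : ℕ)) * (x^k * (1-x)^(M-(k+1)))) x := by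
  have h1 : HasDerivAt (fun y : ℝ => y^k) ((k:ℝ) * x^(k-1)) x := hasDerivAt_pow k x
  have h2 : HasDerivAt (fun y : ℝ => (1-y)^(M-k))
      (((M-k : ℕ):ℝ) * (1-x)^(M-k-1) * (-1)) x := by
    have hinner : HasDerivAt (fun y : ℝ => 1 - y) (-1) x := by
      simpa using (hasDerivAt_id' x).const_sub (1:ℝ)
    exact (hasDerivAt_pow (M-k) (1-x)).comp x hinner
  have h3 := ((h1.const_mul (M.choose k : ℝ)).fun_mul h2)
  refine h3.congr_deriv ?_
  have hchoose : ((k+1) * M.choose (k+1) : ℕ) = (M - k) * M.choose k := by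
    rw [mul_comm (k+1)]
    rw [Nat.choose_succ_right_eq]
    ring
  have hexp : M - (k+1) = M - k - 1 := by omega
  rw [hchoose, hexp]
  push_cast
  ring

lemma hasDerivAt_Fup (T : ℕ) (hTM : T < M) (x : ℝ) :
    HasDerivAt (Fup M T) (gker M T x) x := by
  have hsum : HasDerivAt (Fup M T)
      (∑ k ∈ Finset.Ioc T M,
        ((k * M.choose k : ℕ) * (x^(k-1) * (1-x)^(M-k))
        - (((k+1) * M.choose (k+1) : ℕ)) * (x^k * (1-x)^(M-(k+1))))) x := by
    apply HasDerivAt.fun_sum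
    intro k hk
    rw [Finset.mem_Ioc] at hk
    exact hasDerivAt_term M k (by omega) hk.2 x
  convert hsum using 1
  -- telescoping
  set u : ℕ → ℝ := fun k => (k * M.choose k : ℕ) * (x^(k-1) * (1-x)^(M-k)) with hu
  have hre : ∀ k, (k * M.choose k : ℕ) * (x^(k-1) * (1-x)^(M-k))
        - (((k+1) * M.choose (k+1) : ℕ)) * (x^k * (1-x)^(M-(k+1))) = u k - u (k+1) := by
    intro k
    simp only [hu, Nat.add_sub_cancel]
  rw [Finset.sum_congr rfl (fun k _ => hre k)]
  have : Finset.Ioc T M = Finset.Ico (T+1) (M+1) := by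
    ext a; simp only [Finset.mem_Ioc, Finset.mem_Ico]; omega
  rw [this, Finset.sum_Ico_eq_sum_range]
  have htel : ∑ i ∈ Finset.range (M + 1 - (T+1)), (u (T+1+i) - u (T+1+(i+1)))
      = u (T+1) - u (T+1 + (M+1-(T+1))) := by
    have := Finset.sum_range_sub' (fun i => u (T+1+i)) (M+1-(T+1))
    simpa using this
  have hend : T + 1 + (M + 1 - (T+1)) = M + 1 := by omega
  have huM1 : u (M+1) = 0 := by
    simp only [hu]
    rw [Nat.choose_succ_self]
    simp
  have hexp2 : M - (T+1) = M - T - 1 := by omega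
  calc gker M T x = u (T+1) := by
        simp only [gker, hu, Nat.add_sub_cancel, hexp2]
      _ = ∑ i ∈ Finset.range (M + 1 - (T+1)), (u (T+1+i) - u (T+1+(i+1))) := by
        rw [htel, hend, huM1, sub_zero]
      _ = ∑ i ∈ Finset.range (M + 1 - (T+1)), (u (T+1+i) - u (T+1+i+1)) := by
        simp only [Nat.add_assoc]

end Median

lemma median_bound (n T : ℕ) (hn : 2 ≤ n) (hT : 1 ≤ T) :
    Fup (n*T) T (1/(n:ℝ)) ≤ 1/2 := by
  set M := n * T with hM
  have hTM : T < M := by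
    have : 2 * T ≤ n * T := Nat.mul_le_mul_right T hn
    omega
  set g : ℝ → ℝ := gker M T with hg
  have hgc : Continuous g := by
    rw [hg]
    unfold gker
    fun_prop
  have hFTC : ∀ a b : ℝ, ∫ x in a..b, g x = Fup M T b - Fup M T a := by
    intro a b
    exact intervalIntegral.integral_eq_sub_of_hasDerivAt
      (fun x _ => hasDerivAt_Fup M T hTM x) (hgc.intervalIntegrable a b)
  have hn0 : (0:ℝ) < n := by
    have : 0 < n := by omega
    exact_mod_cast this
  set p : ℝ := 1/(n:ℝ) with hp
  have hp0 : 0 < p := by positivity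
  have h2p : 2 * p ≤ 1 := by
    rw [hp]
    rw [mul_one_div, div_le_one hn0]
    exact_mod_cast hn
  have hF0 : Fup M T 0 = 0 := by
    unfold Fup
    apply Finset.sum_eq_zero
    intro k hk
    rw [Finset.mem_Ioc] at hk
    have : (0:ℝ)^k = 0 := zero_pow (by omega)
    rw [this]; ring
  have hF1 : Fup M T 1 = 1 := by
    unfold Fup
    rw [Finset.sum_eq_single M]
    · simp
    · intro k hk hne
      rw [Finset.mem_Ioc] at hk
      have : (1:ℝ) - 1 = 0 := by ring
      rw [this, zero_pow (by omega)]
      ring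
    · intro h
      exact absurd (Finset.mem_Ioc.mpr ⟨hTM, le_rfl⟩) h
  have hKe : M - T - 1 = (n-1)*T - 1 := by
    have : M = n * T := hM
    have h1 : 1 ≤ n := by omega
    have : (n-1)*T = n*T - T := by
      rw [Nat.sub_mul, one_mul]
    omega
  -- pointwise reflection
  have hgpt : ∀ x ∈ Set.Icc (0:ℝ) p, g (p - x) ≤ g (p + x) := by
    intro x hx
    simp only [hg, gker]
    have hr := reflect_ineq n T hn hT x hx.1 hx.2
    rw [← hKe] at hr
    have hc0 : (0:ℝ) ≤ ((T+1) * M.choose (T+1) : ℕ) := Nat.cast_nonneg _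
    have e1 : (1:ℝ) - (p - x) = 1 - 1/(n:ℝ) + x := by rw [hp]; ring
    have e2 : (1:ℝ) - (p + x) = 1 - 1/(n:ℝ) - x := by rw [hp]; ring
    rw [e1, e2]
    apply mul_le_mul_of_nonneg_left _ hc0
    have e3 : p - x = 1/(n:ℝ) - x := by rw [hp]
    have e4 : p + x = 1/(n:ℝ) + x := by rw [hp]
    rw [e3, e4]
    exact hr
  have hint1 : IntervalIntegrable (fun x => g (p - x)) MeasureTheory.volume 0 p :=
    (hgc.comp (continuous_const.sub continuous_id)).intervalIntegrable 0 p
  have hint2 : IntervalIntegrable (fun x => g (p + x)) MeasureTheory.volume 0 p :=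
    (hgc.comp (continuous_const.add continuous_id)).intervalIntegrable 0 p
  have step1 : ∫ x in (0:ℝ)..p, g x = ∫ x in (0:ℝ)..p, g (p - x) := by
    have := intervalIntegral.integral_comp_sub_left g p (a := (0:ℝ)) (b := p)
    rw [sub_self, sub_zero] at this
    exact this.symm
  have step2 : ∫ x in (0:ℝ)..p, g (p - x) ≤ ∫ x in (0:ℝ)..p, g (p + x) :=
    intervalIntegral.integral_mono_on hp0.le hint1 hint2 hgpt
  have step3 : ∫ x in (0:ℝ)..p, g (p + x) = ∫ x in p..(2*p), g x := by
    have := intervalIntegral.integral_comp_add_left g p (a := (0:ℝ)) (b := p)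
    rw [add_zero] at this
    have h2 : p + p = 2 * p := by ring
    rw [h2] at this
    exact this
  have hgnn : ∀ᵐ x ∂(MeasureTheory.volume.restrict (Set.Ioc p 1)), 0 ≤ g x := by
    apply MeasureTheory.ae_restrict_of_forall_mem measurableSet_Ioc
    intro x hx
    simp only [hg, gker]
    have hx0 : 0 ≤ x := le_of_lt (lt_of_lt_of_le hp0 hx.1.le)
    have h1x : (0:ℝ) ≤ 1 - x := by linarith [hx.2]
    exact mul_nonneg (Nat.cast_nonneg _) (mul_nonneg (pow_nonneg hx0 _) (pow_nonneg h1x _))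
  have step4 : ∫ x in p..(2*p), g x ≤ ∫ x in p..(1:ℝ), g x := by
    apply intervalIntegral.integral_mono_interval le_rfl (by linarith) (by linarith)
      hgnn (hgc.intervalIntegrable p 1)
  have hval1 : ∫ x in (0:ℝ)..p, g x = Fup M T p := by rw [hFTC, hF0, sub_zero]
  have hval2 : ∫ x in p..(1:ℝ), g x = 1 - Fup M T p := by rw [hFTC, hF1]
  have : Fup M T p ≤ 1 - Fup M T p := by
    calc Fup M T p = ∫ x in (0:ℝ)..p, g x := hval1.symm
      _ = ∫ x in (0:ℝ)..p, g (p - x) := step1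
      _ ≤ ∫ x in (0:ℝ)..p, g (p + x) := step2
      _ = ∫ x in p..(2*p), g x := step3
      _ ≤ ∫ x in p..(1:ℝ), g x := step4
      _ = 1 - Fup M T p := hval2
  linarith

noncomputable def fb (n T k : ℕ) : ℝ :=
  ((n*T).choose k : ℝ) * (1/(n:ℝ))^k * (1 - 1/(n:ℝ))^(n*T - k)

section PMF

variable {n T : ℕ}

lemma q_nonneg (hn : 1 ≤ n) : (0:ℝ) ≤ 1 - 1/(n:ℝ) := by
  have hn0 : (0:ℝ) < n := by exact_mod_cast hn
  have : 1/(n:ℝ) ≤ 1 := by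
    rw [div_le_one hn0]; exact_mod_cast hn
  linarith

lemma fb_nonneg (hn : 1 ≤ n) (k : ℕ) : 0 ≤ fb n T k := by
  have hn0 : (0:ℝ) < n := by exact_mod_cast hn
  have h2 : (0:ℝ) ≤ 1 - 1/(n:ℝ) := q_nonneg hn
  have h1 : (0:ℝ) ≤ 1/(n:ℝ) := by positivity
  unfold fb
  exact mul_nonneg (mul_nonneg (Nat.cast_nonneg _) (pow_nonneg h1 _)) (pow_nonneg h2 _)

lemma fb_sum_one (hn : 1 ≤ n) : ∑ k ∈ Finset.range (n*T+1), fb n T k = 1 := by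
  have h := add_pow (1/(n:ℝ)) (1 - 1/(n:ℝ)) (n*T)
  have hone : (1/(n:ℝ) + (1 - 1/(n:ℝ))) = 1 := by ring
  rw [hone, one_pow] at h
  rw [show ∑ k ∈ Finset.range (n*T+1), fb n T k
      = ∑ k ∈ Finset.range (n*T+1), (1/(n:ℝ))^k * (1 - 1/(n:ℝ))^(n*T-k) * ((n*T).choose k : ℝ)
    from Finset.sum_congr rfl (fun k _ => by unfold fb; ring)]
  exact h.symm

lemma fb_ratio (hn : 1 ≤ n) (k : ℕ) (hk : k < n*T) :
    fb n T (k+1) * ((k:ℝ)+1) * (1 - 1/(n:ℝ)) = fb n T k * (((n*T - k : ℕ)):ℝ) * (1/(n:ℝ)) := by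
  unfold fb
  have hch : (((n*T).choose (k+1) * (k+1) : ℕ) : ℝ) = (((n*T).choose k * (n*T - k) : ℕ) : ℝ) := by
    exact_mod_cast congrArg (Nat.cast (R := ℝ)) (Nat.choose_succ_right_eq (n*T) k)
  push_cast at hch
  have hc2 : ((n*T - k : ℕ):ℝ) = ((n*T - (k+1) : ℕ):ℝ) + 1 := by
    have h : n*T - k = (n*T - (k+1)) + 1 := by omega
    exact_mod_cast congrArg (Nat.cast (R := ℝ)) h
  rw [hc2] at hch ⊢
  have hexp : n*T - k = (n*T - (k+1)) + 1 := by omega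
  rw [hexp, pow_succ]
  push_cast
  linear_combination ((1/(n:ℝ))^k * (1/(n:ℝ)) * (1 - 1/(n:ℝ)) * (1 - 1/(n:ℝ))^(n*T - (k+1))) * hch

lemma fb_step_below (hn : 1 ≤ n) (k : ℕ) (hk : k < T) : fb n T k ≤ fb n T (k+1) := by
  have hT1 : T ≤ n * T := Nat.le_mul_of_pos_left T (by omega)
  have hkM : k < n*T := lt_of_lt_of_le hk hT1
  have hI := fb_ratio (T := T) hn k hkM
  have hn0 : (0:ℝ) < n := by exact_mod_cast hn
  have hp0 : (0:ℝ) < 1/(n:ℝ) := by positivity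
  have hMk : (0:ℝ) < ((n*T - k : ℕ):ℝ) := by
    have : 0 < n*T - k := by omega
    exact_mod_cast this
  have hfkk : 0 ≤ fb n T (k+1) := fb_nonneg hn (k+1)
  have hcmp : ((k:ℝ)+1) * (1 - 1/(n:ℝ)) ≤ ((n*T - k : ℕ):ℝ) * (1/(n:ℝ)) := by
    have hc1 : ((n*T - k : ℕ):ℝ) = (n:ℝ)*(T:ℝ) - k := by
      push_cast [Nat.cast_sub hkM.le]; ring
    rw [hc1]
    have h1 : (k:ℝ) + 1 ≤ T := by exact_mod_cast hk
    have h2 : (1:ℝ) ≤ n := by exact_mod_cast hn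
    have hkey : (((k:ℝ)+1) * ((n:ℝ)-1)) ≤ (n:ℝ)*(T:ℝ) - k := by nlinarith
    have e2 : ((k:ℝ)+1) * (1 - 1/(n:ℝ)) = (((k:ℝ)+1)*((n:ℝ)-1)) * (1/(n:ℝ)) := by
      field_simp
    rw [e2]
    exact mul_le_mul_of_nonneg_right hkey (by positivity)
  have h2 : fb n T (k+1) * (((k:ℝ)+1) * (1 - 1/(n:ℝ)))
      ≤ fb n T (k+1) * (((n*T - k : ℕ):ℝ) * (1/(n:ℝ))) :=
    mul_le_mul_of_nonneg_left hcmp hfkk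
  have h3 : fb n T k * (((n*T - k : ℕ):ℝ) * (1/(n:ℝ)))
      ≤ fb n T (k+1) * (((n*T - k : ℕ):ℝ) * (1/(n:ℝ))) := by
    calc fb n T k * (((n*T - k : ℕ):ℝ) * (1/(n:ℝ)))
        = fb n T k * ((n*T - k : ℕ):ℝ) * (1/(n:ℝ)) := by ring
      _ = fb n T (k+1) * ((k:ℝ)+1) * (1 - 1/(n:ℝ)) := hI.symm
      _ = fb n T (k+1) * (((k:ℝ)+1) * (1 - 1/(n:ℝ))) := by ring
      _ ≤ fb n T (k+1) * (((n*T - k : ℕ):ℝ) * (1/(n:ℝ))) := h2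
  exact le_of_mul_le_mul_right h3 (by positivity)

lemma fb_mono_le (hn : 1 ≤ n) : ∀ k, k ≤ T → fb n T k ≤ fb n T T := by
  suffices h : ∀ d k, k + d = T → fb n T k ≤ fb n T T by
    intro k hk
    exact h (T - k) k (by omega)
  intro d
  induction d with
  | zero => intro k hk; rw [show k = T by omega]
  | succ d ih =>
    intro k hk
    have h1 : fb n T k ≤ fb n T (k+1) := fb_step_below hn k (by omega)
    exact h1.trans (ih (k+1) (by omega))

lemma fb_step_above (hn : 2 ≤ n) (j : ℕ) (hj : j < T) :
    fb n T (T+j) * ((T:ℝ) - j) ≤ fb n T (T+j+1) * ((T:ℝ)+j+1) := by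
  have hn0 : (0:ℝ) < n := by
    have : (0:ℕ) < n := by omega
    exact_mod_cast this
  have hq0 : (0:ℝ) < 1 - 1/(n:ℝ) := by
    have h2 : (2:ℝ) ≤ n := by exact_mod_cast hn
    have : 1/(n:ℝ) ≤ 1/2 := by
      apply div_le_div_of_nonneg_left <;> linarith
    linarith
  have hTM : T + j < n * T := by
    have : 2*T ≤ n*T := Nat.mul_le_mul_right T hn
    omega
  have hI := fb_ratio (T := T) (by omega) (T+j) hTM
  have hfnn : 0 ≤ fb n T (T+j) := fb_nonneg (by omega) (T+j)
  have hcast : ((n*T - (T+j) : ℕ):ℝ) = (n:ℝ)*T - T - j := by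
    push_cast [Nat.cast_sub hTM.le]; ring
  -- (T-j) * q ≤ (nT-T-j) * p
  have hcmp : ((T:ℝ) - j) * (1 - 1/(n:ℝ)) ≤ ((n:ℝ)*T - T - j) * (1/(n:ℝ)) := by
    have h2 : (2:ℝ) ≤ n := by exact_mod_cast hn
    have hjT : (j:ℝ) < T := by exact_mod_cast hj
    have hkey : (((T:ℝ) - j) * ((n:ℝ)-1)) ≤ (n:ℝ)*(T:ℝ) - T - j := by nlinarith
    have e2 : ((T:ℝ) - j) * (1 - 1/(n:ℝ)) = (((T:ℝ) - j)*((n:ℝ)-1)) * (1/(n:ℝ)) := by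
      field_simp
    rw [e2]
    exact mul_le_mul_of_nonneg_right hkey (by positivity)
  have key : fb n T (T+j) * (((T:ℝ) - j) * (1 - 1/(n:ℝ)))
      ≤ fb n T (T+j+1) * (((T:ℝ)+j+1) * (1 - 1/(n:ℝ))) := by
    calc fb n T (T+j) * (((T:ℝ) - j) * (1 - 1/(n:ℝ)))
        ≤ fb n T (T+j) * (((n:ℝ)*T - T - j) * (1/(n:ℝ))) :=
          mul_le_mul_of_nonneg_left hcmp hfnn
      _ = fb n T (T+j) * ((n*T - (T+j) : ℕ):ℝ) * (1/(n:ℝ)) := by rw [hcast]; ring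
      _ = fb n T (T+j+1) * (((T:ℝ)+j)+1) * (1 - 1/(n:ℝ)) := by
          rw [← hI]
          push_cast
          ring
      _ = fb n T (T+j+1) * (((T:ℝ)+j+1) * (1 - 1/(n:ℝ))) := by ring
  have := le_of_mul_le_mul_right
    (by
      calc fb n T (T+j) * ((T:ℝ) - j) * (1 - 1/(n:ℝ))
          = fb n T (T+j) * (((T:ℝ) - j) * (1 - 1/(n:ℝ))) := by ring
        _ ≤ fb n T (T+j+1) * (((T:ℝ)+j+1) * (1 - 1/(n:ℝ))) := key
        _ = fb n T (T+j+1) * ((T:ℝ)+j+1) * (1 - 1/(n:ℝ)) := by ring) hq0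
  exact this

lemma fb_lower_above (hn : 2 ≤ n) (hT : 1 ≤ T) :
    ∀ j, j ≤ T → (1 - (j:ℝ)^2/(T:ℝ)) * fb n T T ≤ fb n T (T+j) := by
  have hT0 : (0:ℝ) < T := by exact_mod_cast hT
  intro j
  induction j with
  | zero => intro _; simp
  | succ j ih =>
    intro hj
    have hjT : j < T := by omega
    have ihj := ih (by omega)
    have hstep := fb_step_above hn j hjT
    have hTj0 : (0:ℝ) ≤ (T:ℝ) - j := by
      have : (j:ℝ) < T := by exact_mod_cast hjT
      linarith
    have hfT0 : 0 ≤ fb n T T := fb_nonneg (by omega) T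
    have h1 : (1 - (j:ℝ)^2/T) * fb n T T * ((T:ℝ) - j) ≤ fb n T (T+j) * ((T:ℝ) - j) :=
      mul_le_mul_of_nonneg_right ihj hTj0
    have halg : (1 - ((j:ℝ)+1)^2/T) * ((T:ℝ)+j+1) ≤ (1 - (j:ℝ)^2/T) * ((T:ℝ) - j) := by
      have hj0 : (0:ℝ) ≤ j := Nat.cast_nonneg j
      have hcore : ((T:ℝ) - ((j:ℝ)+1)^2) * ((T:ℝ)+j+1) ≤ ((T:ℝ) - (j:ℝ)^2) * ((T:ℝ) - j) := by
        nlinarith [mul_nonneg (mul_nonneg hj0 hj0) hj0, sq_nonneg ((j:ℝ)+1),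
          mul_nonneg (mul_nonneg (add_nonneg hj0 zero_le_one) (add_nonneg hj0 zero_le_one))
            (add_nonneg hj0 zero_le_one)]
      have e1 : (1 - ((j:ℝ)+1)^2/T) * ((T:ℝ)+j+1)
          = (((T:ℝ) - ((j:ℝ)+1)^2) * ((T:ℝ)+j+1)) / T := by field_simp
      have e2 : (1 - (j:ℝ)^2/T) * ((T:ℝ) - j)
          = (((T:ℝ) - (j:ℝ)^2) * ((T:ℝ) - j)) / T := by field_simp
      rw [e1, e2]
      gcongr
    have h2 : (1 - ((j:ℝ)+1)^2/T) * ((T:ℝ)+j+1) * fb n T T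
        ≤ (1 - (j:ℝ)^2/T) * ((T:ℝ) - j) * fb n T T :=
      mul_le_mul_of_nonneg_right halg hfT0
    have hTj1 : (0:ℝ) < (T:ℝ)+j+1 := by positivity
    have hfinal : (1 - ((j:ℝ)+1)^2/T) * fb n T T * ((T:ℝ)+j+1)
        ≤ fb n T (T+j+1) * ((T:ℝ)+j+1) := by
      calc (1 - ((j:ℝ)+1)^2/T) * fb n T T * ((T:ℝ)+j+1)
          = (1 - ((j:ℝ)+1)^2/T) * ((T:ℝ)+j+1) * fb n T T := by ring
        _ ≤ (1 - (j:ℝ)^2/T) * ((T:ℝ) - j) * fb n T T := h2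
        _ = (1 - (j:ℝ)^2/T) * fb n T T * ((T:ℝ) - j) := by ring
        _ ≤ fb n T (T+j) * ((T:ℝ) - j) := h1
        _ ≤ fb n T (T+j+1) * ((T:ℝ)+j+1) := hstep
    have := le_of_mul_le_mul_right hfinal hTj1
    convert this using 2
    · rfl
    · push_cast
      ring
    · ring

lemma fbT_le (hn : 2 ≤ n) (hT : 1 ≤ T) :
    fb n T T * (((Nat.sqrt T / 2 : ℕ):ℝ) + 1) * (3/4) ≤ 1 := by
  set L : ℕ := Nat.sqrt T / 2 with hL
  have hL2 : 4 * L^2 ≤ T := by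
    have h1 : 2*L ≤ Nat.sqrt T := by omega
    have h2 : (2*L)^2 ≤ Nat.sqrt T ^2 := Nat.pow_le_pow_left h1 2
    have h3 := Nat.sqrt_le' T
    calc 4*L^2 = (2*L)^2 := by ring
      _ ≤ Nat.sqrt T ^ 2 := h2
      _ ≤ T := h3
  have hLT : L ≤ T := by
    have := Nat.sqrt_le_self T
    omega
  have hTM : T + L ≤ n * T := by
    have : 2*T ≤ n*T := Nat.mul_le_mul_right T hn
    omega
  have hfT0 : 0 ≤ fb n T T := fb_nonneg (by omega) T
  have hlow : ∀ j ∈ Finset.range (L+1), fb n T T * (3/4) ≤ fb n T (T+j) := by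
    intro j hj
    rw [Finset.mem_range] at hj
    have hjL : j ≤ L := by omega
    have hjT : j ≤ T := hjL.trans hLT
    have h34 : (3/4 : ℝ) ≤ 1 - (j:ℝ)^2/(T:ℝ) := by
      have hT0 : (0:ℝ) < T := by exact_mod_cast hT
      have h1 : j^2 ≤ L^2 := Nat.pow_le_pow_left hjL 2
      have h2 : 4 * j^2 ≤ T := by omega
      have hj2 : 4*((j:ℝ))^2 ≤ (T:ℝ) := by exact_mod_cast h2
      have hdiv : (j:ℝ)^2/T ≤ 1/4 := by
        rw [div_le_iff₀ hT0]
        linarith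
      linarith
    calc fb n T T * (3/4) ≤ fb n T T * (1 - (j:ℝ)^2/(T:ℝ)) :=
          mul_le_mul_of_nonneg_left h34 hfT0
      _ = (1 - (j:ℝ)^2/(T:ℝ)) * fb n T T := by ring
      _ ≤ fb n T (T+j) := fb_lower_above hn hT j hjT
  have hsum1 : ∑ j ∈ Finset.range (L+1), fb n T (T+j) ≤ 1 := by
    have he : ∑ j ∈ Finset.range (L+1), fb n T (T+j)
        = ∑ k ∈ Finset.Ico T (T+(L+1)), fb n T k := by
      rw [Finset.sum_Ico_eq_sum_range]
      simp
    rw [he, ← fb_sum_one (T := T) (by omega : 1 ≤ n)]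
    apply Finset.sum_le_sum_of_subset_of_nonneg
    · intro x hx
      rw [Finset.mem_Ico] at hx
      rw [Finset.mem_range]
      omega
    · intro k _ _
      exact fb_nonneg (by omega) k
  have hsum2 : ((L+1 : ℕ):ℝ) * (fb n T T * (3/4)) ≤ ∑ j ∈ Finset.range (L+1), fb n T (T+j) := by
    have := Finset.card_nsmul_le_sum (Finset.range (L+1)) (fun j => fb n T (T+j))
      (fb n T T * (3/4)) (fun j hj => hlow j hj)
    rw [Finset.card_range] at this
    simpa [nsmul_eq_mul] using this
  calc fb n T T * (((L:ℕ):ℝ) + 1) * (3/4) = ((L+1 : ℕ):ℝ) * (fb n T T * (3/4)) := by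
        push_cast; ring
    _ ≤ ∑ j ∈ Finset.range (L+1), fb n T (T+j) := hsum2
    _ ≤ 1 := hsum1

end PMF

lemma binom_quarter (n T a : ℕ) (hn : 3 ≤ n) (ha : 1 ≤ a) (haT : 180 * a^2 ≤ T) :
    (1/4 : ℝ) ≤ ∑ k ∈ Finset.range (T - a + 1), fb n T k := by
  have haa : a ≤ a^2 := by nlinarith
  have haT' : a ≤ T := by nlinarith
  have hT : 1 ≤ T := by omega
  have hn1 : 1 ≤ n := by omega
  set M := n * T with hM
  set L : ℕ := Nat.sqrt T / 2 with hL
  -- L ≥ 6a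
  have hL6a : 6 * a ≤ L := by
    have h169 : (13*a)^2 ≤ T := by nlinarith
    have h13 : 13 * a ≤ Nat.sqrt T := by
      calc 13*a = Nat.sqrt ((13*a)^2) := (Nat.sqrt_eq' (13*a)).symm
        _ ≤ Nat.sqrt T := Nat.sqrt_le_sqrt h169
    omega
  -- mid bound
  have hfT0 : 0 ≤ fb n T T := fb_nonneg (by omega) T
  have hfTle : fb n T T * (((L:ℕ):ℝ) + 1) * (3/4) ≤ 1 := fbT_le (by omega) hT
  have hmid : ∑ k ∈ Finset.Ico (T-a+1) (T+1), fb n T k ≤ (a:ℝ) * fb n T T := by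
    have hcard : (Finset.Ico (T-a+1) (T+1)).card = a := by
      rw [Nat.card_Ico]; omega
    have := Finset.sum_le_card_nsmul (Finset.Ico (T-a+1) (T+1)) (fb n T) (fb n T T)
      (fun k hk => by
        rw [Finset.mem_Ico] at hk
        exact fb_mono_le hn1 k (by omega))
    rw [hcard, nsmul_eq_mul] at this
    exact this
  -- mid ≤ 2/9
  have hmid29 : (a:ℝ) * fb n T T ≤ 2/9 := by
    have hLa : 6*((a:ℕ):ℝ) ≤ ((L:ℕ):ℝ) + 1 := by
      have : ((6*a : ℕ):ℝ) ≤ ((L:ℕ):ℝ) := by exact_mod_cast hL6a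
      push_cast at this
      linarith
    have hkey := mul_le_mul_of_nonneg_left hLa hfT0
    -- fb * (6a) ≤ fb * (L+1)
    have h7 : fb n T T * (6*(a:ℝ)) * (3/4) ≤ fb n T T * (((L:ℕ):ℝ)+1) * (3/4) := by
      nlinarith
    have e : fb n T T * (6*(a:ℝ)) * (3/4) = (9/2) * ((a:ℝ) * fb n T T) := by ring
    rw [e] at h7
    linarith [h7.trans hfTle]
  -- tail ≤ 1/2
  have htail : ∑ k ∈ Finset.Ico (T+1) (M+1), fb n T k ≤ 1/2 := by
    have he : ∑ k ∈ Finset.Ico (T+1) (M+1), fb n T k = Fup M T (1/(n:ℝ)) := by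
      unfold Fup fb
      apply Finset.sum_congr
      · ext x; simp only [Finset.mem_Ioc, Finset.mem_Ico]; omega
      · intro k _; rfl
    rw [he, hM]
    exact median_bound n T (by omega) hT
  -- split
  have hsplit : ∑ k ∈ Finset.range (T-a+1), fb n T k
      + ∑ k ∈ Finset.Ico (T-a+1) (T+1), fb n T k
      + ∑ k ∈ Finset.Ico (T+1) (M+1), fb n T k = 1 := by
    rw [Finset.range_eq_Ico]
    rw [Finset.sum_Ico_consecutive _ (by omega : 0 ≤ T-a+1) (by omega : T-a+1 ≤ T+1)]
    rw [Finset.sum_Ico_consecutive _ (by omega : 0 ≤ T+1) (by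
      have : 2*T ≤ n*T := Nat.mul_le_mul_right T (by omega)
      omega : T+1 ≤ M+1)]
    rw [← Finset.range_eq_Ico]
    exact fb_sum_one hn1
  have := hmid.trans hmid29
  linarith



variable {Ω : Type} [MeasurableSpace Ω] {P : Measure Ω} [IsProbabilityMeasure P]
variable {ι : Type*} [DecidableEq ι]
attribute [local instance] Classical.propDecidable

/-- atom event: exactly the indices in F (within S) occur -/
def atomE (S F : Finset ι) (A : ι → Set Ω) : Set Ω :=
  ⋂ s ∈ S, (if s ∈ F then A s else (A s)ᶜ)

lemma atomE_measurable (S F : Finset ι) (A : ι → Set Ω) (hA : ∀ s, MeasurableSet (A s)) :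
    MeasurableSet (atomE S F A) := by
  apply Set.Finite.measurableSet_biInter S.finite_toSet
  intro s _
  by_cases h : s ∈ F <;> simp [h, hA s, (hA s).compl]

lemma count_eq_union (S : Finset ι) (A : ι → Set Ω) (k : ℕ) :
    {ω | (S.filter (fun s => ω ∈ A s)).card = k}
      = ⋃ F ∈ S.powersetCard k, atomE S F A := by
  ext ω
  simp only [Set.mem_setOf_eq, Set.mem_iUnion, Finset.mem_powersetCard]
  constructor
  · intro h
    refine ⟨S.filter (fun s => ω ∈ A s), ⟨Finset.filter_subset _ _, h⟩, ?_⟩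
    unfold atomE
    simp only [Set.mem_iInter]
    intro s hs
    by_cases hm : s ∈ S.filter (fun s => ω ∈ A s)
    · simp only [hm, if_pos]
      exact (Finset.mem_filter.mp hm).2
    · simp only [hm, if_neg]
      intro hc
      exact hm (Finset.mem_filter.mpr ⟨hs, hc⟩)
  · rintro ⟨F, ⟨hFS, hFk⟩, hω⟩
    unfold atomE at hω
    simp only [Set.mem_iInter] at hω
    have : S.filter (fun s => ω ∈ A s) = F := by
      ext s
      simp only [Finset.mem_filter]
      constructor
      · rintro ⟨hsS, hsA⟩
        by_contra hsF
        have := hω s hsS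
        rw [if_neg hsF] at this
        exact this hsA
      · intro hsF
        have hsS := hFS hsF
        have := hω s hsS
        rw [if_pos hsF] at this
        exact ⟨hsS, this⟩
    rw [this, hFk]

lemma atomE_disjoint (S : Finset ι) (A : ι → Set Ω) {F F' : Finset ι}
    (hF : F ⊆ S) (hF' : F' ⊆ S) (hne : F ≠ F') :
    Disjoint (atomE S F A) (atomE S F' A) := by
  rw [Set.disjoint_left]
  intro ω h1 h2
  unfold atomE at h1 h2
  simp only [Set.mem_iInter] at h1 h2
  -- there is s in symmetric difference
  have : ∃ s ∈ S, (s ∈ F ∧ s ∉ F') ∨ (s ∉ F ∧ s ∈ F') := by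
    by_contra hc
    push_neg at hc
    apply hne
    ext s
    constructor
    · intro hs
      have := hc s (hF hs)
      tauto
    · intro hs
      have := hc s (hF' hs)
      tauto
  obtain ⟨s, hsS, hcase⟩ := this
  rcases hcase with ⟨h1F, h2F⟩ | ⟨h1F, h2F⟩
  · have e1 := h1 s hsS
    have e2 := h2 s hsS
    rw [if_pos h1F] at e1
    rw [if_neg h2F] at e2
    exact e2 e1
  · have e1 := h1 s hsS
    have e2 := h2 s hsS
    rw [if_neg h1F] at e1
    rw [if_pos h2F] at e2
    exact e1 e2

lemma count_prob (S : Finset ι) (A : ι → Set Ω) (hA : ∀ s, MeasurableSet (A s))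
    (p q : ℝ) (hp : 0 ≤ p) (hq : 0 ≤ q)
    (hatom : ∀ F ∈ S.powerset, P (atomE S F A)
      = ENNReal.ofReal (p ^ F.card * q ^ (S.card - F.card))) (k : ℕ) :
    P {ω | (S.filter (fun s => ω ∈ A s)).card = k}
      = ENNReal.ofReal ((S.card.choose k : ℝ) * p^k * q^(S.card - k)) := by
  rw [count_eq_union]
  rw [measure_biUnion_finset]
  · have hval : ∀ F ∈ S.powersetCard k, P (atomE S F A)
        = ENNReal.ofReal (p^k * q^(S.card - k)) := by
      intro F hF
      rw [Finset.mem_powersetCard] at hF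
      rw [hatom F (Finset.mem_powerset.mpr hF.1), hF.2]
    rw [Finset.sum_congr rfl hval, Finset.sum_const, Finset.card_powersetCard]
    rw [nsmul_eq_mul]
    rw [← ENNReal.ofReal_natCast (S.card.choose k), ← ENNReal.ofReal_mul (by positivity)]
    congr 1
    ring
  · intro F hF F' hF' hne
    rw [Finset.mem_coe, Finset.mem_powersetCard] at hF hF'
    exact atomE_disjoint S A hF.1 hF'.1 (by simpa using hne)
  · intro F _
    exact atomE_measurable S F A hA

lemma count_le_prob (S : Finset ι) (A : ι → Set Ω) (hA : ∀ s, MeasurableSet (A s))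
    (p q : ℝ) (hp : 0 ≤ p) (hq : 0 ≤ q)
    (hatom : ∀ F ∈ S.powerset, P (atomE S F A)
      = ENNReal.ofReal (p ^ F.card * q ^ (S.card - F.card))) (c : ℕ) :
    P {ω | (S.filter (fun s => ω ∈ A s)).card ≤ c}
      = ENNReal.ofReal (∑ k ∈ Finset.range (c+1),
          (S.card.choose k : ℝ) * p^k * q^(S.card - k)) := by
  have hU : {ω | (S.filter (fun s => ω ∈ A s)).card ≤ c}
      = ⋃ k ∈ Finset.range (c+1), {ω | (S.filter (fun s => ω ∈ A s)).card = k} := by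
    ext ω
    simp only [Set.mem_setOf_eq, Set.mem_iUnion, Finset.mem_range]
    constructor
    · intro h; exact ⟨_, by omega, rfl⟩
    · rintro ⟨kk, hkk, h⟩; omega
  rw [hU, measure_biUnion_finset]
  · rw [ENNReal.ofReal_sum_of_nonneg (fun k _ => by positivity)]
    apply Finset.sum_congr rfl
    intro k _
    exact count_prob S A hA p q hp hq hatom k
  · intro k _ k' _ hne
    rw [Function.onFun, Set.disjoint_left]
    intro ω h1 h2
    simp only [Set.mem_setOf_eq] at h1 h2
    exact hne (h1 ▸ h2 ▸ rfl)
  · intro k _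
    rw [count_eq_union]
    apply Set.Finite.measurableSet_biUnion (Finset.finite_toSet _)
    intro F _
    exact atomE_measurable S F A hA



/-- **Lemma 4.5.** For the idealized process with `m ≥ 6n` balls started at round `t₀`
from an arbitrary configuration, any bin `i` with `y_i^{t₀} ≤ 2m/n` reaches load `0` in
some round `t₁ ∈ [t₀, t₀ + ⌈720·m²/n²⌉]` with probability at least `1/4` (for all
sufficiently large `n`). -/
theorem ideal_reaches_empty :
    ∃ n0 : ℕ, ∀ n : ℕ, n0 ≤ n → ∀ m : ℕ, 6 * n ≤ m →
    ∀ (Ω : Type) [inst : MeasurableSpace Ω] (P : Measure Ω) [IsProbabilityMeasure P]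
      (Z : ℕ → Fin n → Ω → Fin n),
      (∀ t j, Measurable (Z t j)) →
      iIndepFun (fun (p : ℕ × Fin n) ω => Z p.1 p.2 ω) P →
      (∀ t j i, P {ω | Z t j ω = i} = (n : ℝ≥0∞)⁻¹) →
    ∀ t0 : ℕ, ∀ y0 : Fin n → ℕ, (∑ i, y0 i) = m →
    ∀ i : Fin n, (y0 i : ℝ) ≤ 2 * (m : ℝ) / n →
      P {ω | ∃ t1 : ℕ, t0 ≤ t1 ∧ t1 ≤ t0 + ⌈(720 : ℝ) * (m : ℝ) ^ 2 / (n : ℝ) ^ 2⌉₊ ∧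
            ideal y0 (fun u j => Z (t0 + u) j ω) (t1 - t0) i = 0}
        ≥ 1 / 4 := by
  refine ⟨3, ?_⟩
  intro n hn3 m hm Ω inst P instP Z hZ hind hunif t0 y0 hsum i hload
  have hn1 : 1 ≤ n := by omega
  have hn0R : (0:ℝ) < n := by exact_mod_cast (by omega : 0 < n)
  set Tf : ℕ := ⌈(720 : ℝ) * (m : ℝ) ^ 2 / (n : ℝ) ^ 2⌉₊ with hTfdef
  set a : ℕ := y0 i with hadef
  by_cases ha0 : a = 0
  · -- trivial case: already empty at t0
    have htriv : {ω : Ω | ∃ t1 : ℕ, t0 ≤ t1 ∧ t1 ≤ t0 + Tf ∧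
        ideal y0 (fun u j => Z (t0 + u) j ω) (t1 - t0) i = 0} = Set.univ := by
      apply Set.eq_univ_of_forall
      intro ω
      refine ⟨t0, le_rfl, Nat.le_add_right _ _, ?_⟩
      rw [Nat.sub_self]
      show y0 i = 0
      exact ha0
    rw [htriv, measure_univ]
    rw [one_div]
    exact ENNReal.inv_le_one.mpr (by norm_num)
  -- main case
  have ha1 : 1 ≤ a := by omega
  have hm0 : 0 < m := by omega
  have haR : (a:ℝ) ≤ 2 * (m:ℝ) / n := hload
  have h180 : 180 * a^2 ≤ Tf := by
    have h1 : ((180 * a^2 : ℕ) : ℝ) ≤ (720:ℝ) * (m:ℝ)^2 / (n:ℝ)^2 := by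
      push_cast
      have ha0R : (0:ℝ) ≤ (a:ℝ) := Nat.cast_nonneg a
      have hsq : ((a:ℝ))^2 ≤ (2*(m:ℝ)/n)^2 := by
        apply pow_le_pow_left₀ ha0R haR
      have : (180:ℝ) * (2*(m:ℝ)/n)^2 = 720 * (m:ℝ)^2/(n:ℝ)^2 := by
        field_simp
        ring
      nlinarith
    have h2 : ((180 * a^2 : ℕ) : ℝ) ≤ (Tf : ℝ) :=
      h1.trans (Nat.le_ceil _)
    exact_mod_cast h2
  have haTf : a ≤ Tf := by nlinarith [h180, ha1]
  have hTf1 : 1 ≤ Tf := by omega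
  -- the index set and events
  set S : Finset (ℕ × Fin n) := (Finset.Ico t0 (t0 + Tf)) ×ˢ (Finset.univ : Finset (Fin n))
    with hSdef
  set A : ℕ × Fin n → Set Ω := fun s => {ω | Z s.1 s.2 ω = i} with hAdef
  have hAmeas : ∀ s, MeasurableSet (A s) := by
    intro s
    have : A s = (Z s.1 s.2) ⁻¹' {i} := by
      ext ω; simp [hAdef]
    rw [this]
    exact hZ s.1 s.2 (measurableSet_singleton i)
  have hScard : S.card = n * Tf := by
    rw [hSdef, Finset.card_product, Nat.card_Ico, Finset.card_univ, Fintype.card_fin,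
      Nat.add_sub_cancel_left]
    exact Nat.mul_comm Tf n
  -- conversion constants
  have hofp : (n : ℝ≥0∞)⁻¹ = ENNReal.ofReal (1/(n:ℝ)) := by
    rw [one_div, ← ENNReal.ofReal_natCast n, ← ENNReal.ofReal_inv_of_pos hn0R]
  have hple : 1/(n:ℝ) ≤ 1 := by
    rw [div_le_one hn0R]
    exact_mod_cast hn1
  have hofq : 1 - (n : ℝ≥0∞)⁻¹ = ENNReal.ofReal (1 - 1/(n:ℝ)) := by
    rw [ENNReal.ofReal_sub _ (by positivity), ENNReal.ofReal_one, hofp]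
  -- atom probabilities
  have hatom : ∀ F ∈ S.powerset, P (atomE S F A)
      = ENNReal.ofReal ((1/(n:ℝ)) ^ F.card * (1 - 1/(n:ℝ)) ^ (S.card - F.card)) := by
    intro F hFmem
    rw [Finset.mem_powerset] at hFmem
    classical
    set sets : ℕ × Fin n → Set (Fin n) := fun s => if s ∈ F then {i} else {i}ᶜ with hsets
    have hpre : ∀ s, (if s ∈ F then A s else (A s)ᶜ) = (fun ω => Z s.1 s.2 ω) ⁻¹' sets s := by
      intro s
      by_cases h : s ∈ F
      · simp only [hsets, if_pos h]
        ext ω; simp [hAdef]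
      · simp only [hsets, if_neg h]
        ext ω; simp [hAdef]
    have hAtom_eq : atomE S F A = ⋂ s ∈ S, (fun ω => Z s.1 s.2 ω) ⁻¹' sets s := by
      unfold atomE
      exact Set.iInter₂_congr (fun s _ => hpre s)
    have hsetsmeas : ∀ s : ℕ × Fin n, s ∈ S → MeasurableSet (sets s) := fun s _ =>
      MeasurableSet.of_discrete
    have hprod := hind.measure_inter_preimage_eq_mul S hsetsmeas
    rw [hAtom_eq, hprod]
    have hfac : ∀ s ∈ S, P ((fun ω => Z s.1 s.2 ω) ⁻¹' sets s)
        = if s ∈ F then ENNReal.ofReal (1/(n:ℝ)) else ENNReal.ofReal (1 - 1/(n:ℝ)) := by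
      intro s _
      by_cases h : s ∈ F
      · rw [if_pos h]
        simp only [hsets, if_pos h]
        have e : (fun ω => Z s.1 s.2 ω) ⁻¹' ({i} : Set (Fin n)) = {ω | Z s.1 s.2 ω = i} := by
          ext ω; simp
        rw [e, hunif s.1 s.2 i, hofp]
      · rw [if_neg h]
        simp only [hsets, if_neg h]
        have e : (fun ω => Z s.1 s.2 ω) ⁻¹' ({i}ᶜ : Set (Fin n))
            = {ω | Z s.1 s.2 ω = i}ᶜ := by
          ext ω; simp
        rw [e, prob_compl_eq_one_sub (by
          have : {ω | Z s.1 s.2 ω = i} = (Z s.1 s.2) ⁻¹' {i} := by ext ω; simp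
          rw [this]
          exact hZ s.1 s.2 (measurableSet_singleton i)),
          hunif s.1 s.2 i, hofq]
    rw [Finset.prod_congr rfl hfac, Finset.prod_ite, Finset.prod_const, Finset.prod_const]
    have hc1 : (S.filter (fun s => s ∈ F)).card = F.card := by
      rw [Finset.filter_mem_eq_inter, Finset.inter_eq_right.mpr hFmem]
    have hc2 : (S.filter (fun s => s ∉ F)).card = S.card - F.card := by
      rw [Finset.filter_not, Finset.card_sdiff_of_subset]
      · rw [Finset.filter_mem_eq_inter, Finset.inter_eq_right.mpr hFmem]
      · rw [Finset.filter_mem_eq_inter, Finset.inter_eq_right.mpr hFmem]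
        exact hFmem
    rw [hc1, hc2]
    rw [← ENNReal.ofReal_pow (by positivity), ← ENNReal.ofReal_pow (q_nonneg hn1),
      ← ENNReal.ofReal_mul (by positivity)]
  -- the good event
  set E : Set Ω := {ω | (@Finset.filter _ (fun s => ω ∈ A s)
      (fun s => Classical.propDecidable _) S).card ≤ Tf - a} with hEdef
  have hPE : P E = ENNReal.ofReal (∑ k ∈ Finset.range (Tf - a + 1),
      (S.card.choose k : ℝ) * (1/(n:ℝ))^k * (1 - 1/(n:ℝ))^(S.card - k)) := by
    rw [hEdef]
    exact count_le_prob S A hAmeas (1/(n:ℝ)) (1 - 1/(n:ℝ)) (by positivity) (q_nonneg hn1)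
      hatom (Tf - a)
  have hPE' : P E = ENNReal.ofReal (∑ k ∈ Finset.range (Tf - a + 1), fb n Tf k) := by
    rw [hPE]
    congr 1
    apply Finset.sum_congr rfl
    intro k _
    rw [hScard]
    rfl
  have hquarter : (1/4 : ℝ) ≤ ∑ k ∈ Finset.range (Tf - a + 1), fb n Tf k :=
    binom_quarter n Tf a hn3 ha1 h180
  -- inclusion into the target event
  have hsub : E ⊆ {ω : Ω | ∃ t1 : ℕ, t0 ≤ t1 ∧ t1 ≤ t0 + Tf ∧
      ideal y0 (fun u j => Z (t0 + u) j ω) (t1 - t0) i = 0} := by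
    intro ω hω
    rw [hEdef, Set.mem_setOf_eq] at hω
    set z : ℕ → Fin n → Fin n := fun u j => Z (t0 + u) j ω with hzdef
    have hNsum : (@Finset.filter _ (fun s => ω ∈ A s)
        (fun s => Classical.propDecidable _) S).card
        = ∑ u ∈ Finset.range Tf, (Finset.univ.filter fun j : Fin n => z u j = i).card := by
      rw [Finset.card_filter, hSdef, Finset.sum_product]
      rw [Finset.sum_Ico_eq_sum_range]
      have he : t0 + Tf - t0 = Tf := by omega
      rw [he]
      apply Finset.sum_congr rfl
      intro u _
      rw [Finset.card_filter]
      apply Finset.sum_congr rfl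
      intro j _
      simp [hAdef, hzdef]
    have hhyp : y0 i + ∑ u ∈ Finset.range Tf,
        (Finset.univ.filter fun j : Fin n => z u j = i).card ≤ Tf := by
      rw [← hNsum]
      omega
    obtain ⟨t, htTf, hzero⟩ := hit_zero y0 z i Tf hhyp
    refine ⟨t0 + t, Nat.le_add_right _ _, by omega, ?_⟩
    rw [Nat.add_sub_cancel_left]
    exact hzero
  -- conclude
  calc (1/4 : ℝ≥0∞) = ENNReal.ofReal (1/4 : ℝ) := by
        rw [ENNReal.ofReal_div_of_pos (by norm_num), ENNReal.ofReal_one]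
        norm_num
    _ ≤ ENNReal.ofReal (∑ k ∈ Finset.range (Tf - a + 1), fb n Tf k) :=
        ENNReal.ofReal_le_ofReal hquarter
    _ = P E := hPE'.symm
    _ ≤ P {ω : Ω | ∃ t1 : ℕ, t0 ≤ t1 ∧ t1 ≤ t0 + Tf ∧
          ideal y0 (fun u j => Z (t0 + u) j ω) (t1 - t0) i = 0} := measure_mono hsub
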